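/- Nonvanishing on reduced paths: if α : I_n → G is a reduced path map with n ≥ 1 (α has no trivial arrows, consecutive arrows never cancel: α_{i+1} is never the reverse of α_i and α_i ≠ α_{i+1} never form an elementarily trivial pair), then there exist 1-forms ω_1,...,ω_n with ∫_α ω_1···ω_n = ±1 ≠ 0. Consequently, if all iterated integrals along α vanish then α is a trivial path map. -/

import Mathlib

open Finset

attribute [local instance] Classical.propDecidable

/-- A digraph: vertex type `V`, arrow relation without self-loops. -/
structure Digraph' (V : Type*) where
  Arrow : V → V → Prop
  irrefl : ∀ v, ¬ Arrow v v

/-- A step of a path map: an arrow `a → b` traversed forward, an arrow `a → b`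
traversed backward (from `b` to `a`), or a trivial arrow at a vertex. -/
inductive PStep (V : Type*) where
  | fwd : V → V → PStep V
  | bwd : V → V → PStep V
  | triv : V → PStep V

namespace PStep
variable {V : Type*}

def src : PStep V → V
  | fwd a _ => a
  | bwd _ b => b
  | triv a => a

def tgt : PStep V → V
  | fwd _ b => b
  | bwd a _ => a
  | triv a => a

/-- The step uses an actual arrow of `G` (or is trivial). -/
def ok (G : Digraph' V) : PStep V → Prop
  | fwd a b => G.Arrow a b
  | bwd a b => G.Arrow a b
  | triv _ => True

/-- The inverse step. -/
def inv : PStep V → PStep V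
  | fwd a b => bwd a b
  | bwd a b => fwd a b
  | triv a => triv a

/-- Pairing `⟨ω, s⟩` of a 1-form with a step: `ω(a)` forward, `-ω(a)` backward,
`0` on trivial arrows. -/
def pair {K : Type*} [Field K] (ω : V → V → K) : PStep V → K
  | fwd a b => ω a b
  | bwd a b => - ω a b
  | triv _ => 0

end PStep

/-- `σ 1, …, σ n` are the steps of a path map `I_n → G`. -/
def IsPathMap {V : Type*} (G : Digraph' V) (n : ℕ) (σ : ℕ → PStep V) : Prop :=
  (∀ t, 1 ≤ t → t ≤ n → (σ t).ok G) ∧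
  (∀ t, 1 ≤ t → t < n → (σ t).tgt = (σ (t + 1)).src)

/-- Volume number of a finite sequence: product of factorials of multiplicities. -/
def volFin {r : ℕ} (g : Fin r → ℕ) : ℕ :=
  ∏ k ∈ Finset.image g Finset.univ,
    Nat.factorial ((Finset.univ.filter (fun j => g j = k)).card)

/-- The iterated integral `∫_α ω_1 ⋯ ω_r` along a path map of length `n`
with steps `σ 1, …, σ n`. -/
noncomputable def iint (K : Type*) [Field K] {V : Type*} (n : ℕ) (σ : ℕ → PStep V)
    (r : ℕ) (ω : Fin r → V → V → K) : K :=
  ∑ f ∈ Finset.univ.filter (fun f : Fin r → Fin n => Monotone f),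
    (∏ i, PStep.pair (ω i) (σ ((f i : ℕ) + 1))) / (volFin (fun i => (f i : ℕ)) : K)

/-- Concatenation of step sequences: the first `n` steps from `σ`, then steps of `τ`. -/
def concatP {V : Type*} (n : ℕ) (σ τ : ℕ → PStep V) : ℕ → PStep V :=
  fun t => if t ≤ n then σ t else τ (t - n)

/-- The inverse path map of a path map of length `n`. -/
def invP {V : Type*} (n : ℕ) (σ : ℕ → PStep V) : ℕ → PStep V :=
  fun t => (σ (n + 1 - t)).inv

/-- Multiplicity of the value `k` in the (1-indexed) sequence `t 1, …, t r`. -/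
def multN (t : ℕ → ℕ) (r k : ℕ) : ℕ := ((Finset.Icc 1 r).filter (fun j => t j = k)).card

/-- Volume number of the sequence `t 1, …, t r`: the product over all `k` of
the factorial of the multiplicity of `k`. -/
noncomputable def volN (t : ℕ → ℕ) (r : ℕ) : ℕ := ∏ᶠ k, Nat.factorial (multN t r k)

lemma PStep.inv_inv {V : Type*} (s : PStep V) : s.inv.inv = s := by
  cases s <;> rfl

lemma volFin_injective {r : ℕ} {g : Fin r → ℕ} (hg : Function.Injective g) :
    volFin g = 1 := by
  unfold volFin
  apply Finset.prod_eq_one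
  intro k hk
  obtain ⟨j, _, rfl⟩ := Finset.mem_image.mp hk
  have : (Finset.univ.filter (fun j' => g j' = g j)) = {j} := by
    ext x
    simp [hg.eq_iff]
  rw [this]
  simp

theorem stmt13 {V : Type*} (K : Type*) [Field K] [CharZero K] (G : Digraph' V)
    (n : ℕ) (hn : 1 ≤ n) (σ : ℕ → PStep V) (h : IsPathMap G n σ)
    (hnotriv : ∀ t, 1 ≤ t → t ≤ n → ∀ v : V, σ t ≠ PStep.triv v)
    (hne : ∀ t, 1 ≤ t → t < n → σ (t + 1) ≠ σ t ∧ σ (t + 1) ≠ (σ t).inv) :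
    ∃ ω : Fin n → V → V → K, iint K n σ n ω = 1 ∨ iint K n σ n ω = -1 := by
  classical
  -- the 1-forms: ω i is supported on the arrow of step i+1, signed so the pairing is 1
  set ω : Fin n → V → V → K := fun i a b =>
    match σ ((i : ℕ) + 1) with
    | PStep.fwd x y => if a = x ∧ b = y then 1 else 0
    | PStep.bwd x y => if a = x ∧ b = y then -1 else 0
    | PStep.triv _ => 0 with hω
  refine ⟨ω, Or.inl ?_⟩
  -- key: nonvanishing of the pairing forces equality up to inversion
  have keyA : ∀ i t : Fin n, PStep.pair (ω i) (σ ((t : ℕ) + 1)) ≠ 0 →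
      σ ((t : ℕ) + 1) = σ ((i : ℕ) + 1) ∨ σ ((t : ℕ) + 1) = (σ ((i : ℕ) + 1)).inv := by
    intro i t hpair
    rcases hi : σ ((i : ℕ) + 1) with ⟨x, y⟩ | ⟨x, y⟩ | v <;>
      rcases ht : σ ((t : ℕ) + 1) with ⟨a, b⟩ | ⟨a, b⟩ | w <;>
      simp only [PStep.pair, hω, hi, ht, ne_eq, neg_eq_zero] at hpair <;>
      first
        | (exact absurd trivial hpair)
        | (exact absurd rfl hpair)
        | (by_cases hc : a = x ∧ b = y
           · obtain ⟨rfl, rfl⟩ := hc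
             simp [PStep.inv]
           · rw [if_neg hc] at hpair
             exact absurd rfl hpair)
  -- the diagonal term is 1
  have keyB : ∀ i : Fin n, PStep.pair (ω i) (σ ((i : ℕ) + 1)) = 1 := by
    intro i
    rcases hi : σ ((i : ℕ) + 1) with ⟨x, y⟩ | ⟨x, y⟩ | v
    · simp [PStep.pair, hω, hi]
    · simp [PStep.pair, hω, hi]
    · exact absurd hi (hnotriv _ (Nat.le_add_left 1 _) (Nat.succ_le_of_lt i.isLt) v)
  -- a monotone f with all pairings nonzero must be the identity
  have keyC : ∀ f : Fin n → Fin n, Monotone f →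
      (∀ i : Fin n, PStep.pair (ω i) (σ ((f i : ℕ) + 1)) ≠ 0) → f = id := by
    intro f hmono hnz
    -- f is injective: consecutive values differ
    have hinj : Function.Injective f := by
      -- first: no two consecutive indices share a value
      have hcons : ∀ i : ℕ, ∀ hi1 : i + 1 < n,
          f ⟨i, Nat.lt_of_succ_lt hi1⟩ ≠ f ⟨i + 1, hi1⟩ := by
        intro i hi1 heq
        set t := f ⟨i + 1, hi1⟩ with htdef
        have h1 := keyA ⟨i, Nat.lt_of_succ_lt hi1⟩ t (heq ▸ hnz ⟨i, Nat.lt_of_succ_lt hi1⟩)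
        have h2 := keyA ⟨i + 1, hi1⟩ t (hnz ⟨i + 1, hi1⟩)
        simp only at h1 h2
        have hne' := hne (i + 1) (Nat.le_add_left 1 _) hi1
        rcases h1 with h1 | h1 <;> rcases h2 with h2 | h2
        · exact hne'.1 (h2.symm.trans h1)
        · have h3 : (σ (i + 1 + 1)).inv = σ (i + 1) := h2.symm.trans h1
          have h4 := congrArg PStep.inv h3
          rw [PStep.inv_inv] at h4
          exact hne'.2 h4
        · exact hne'.2 (h2.symm.trans h1)
        · have h3 : (σ (i + 1 + 1)).inv = (σ (i + 1)).inv := h2.symm.trans h1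
          have h4 := congrArg PStep.inv h3
          rw [PStep.inv_inv, PStep.inv_inv] at h4
          exact hne'.1 h4
      -- hence f is strictly monotone
      have hsm : StrictMono f := by
        intro a b hab
        have : ∀ d : ℕ, ∀ hd : (a : ℕ) + d + 1 < n,
            f a < f ⟨(a : ℕ) + d + 1, hd⟩ := by
          intro d
          induction d with
          | zero =>
            intro hd
            exact lt_of_le_of_ne
              (hmono (by simp [Fin.le_def]))
              (by simpa using hcons (a : ℕ) hd)
          | succ d ih =>
            intro hd
            have hd' : (a : ℕ) + d + 1 < n := by omega
            refine lt_of_lt_of_le (ih hd') (hmono ?_)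
            simp only [Fin.le_def]
            omega
        have hb : (b : ℕ) = (a : ℕ) + ((b : ℕ) - (a : ℕ) - 1) + 1 := by
          have := (Fin.lt_def.mp hab); omega
        have hblt : (a : ℕ) + ((b : ℕ) - (a : ℕ) - 1) + 1 < n := by
          rw [← hb]; exact b.isLt
        have := this ((b : ℕ) - (a : ℕ) - 1) hblt
        have hb' : b = ⟨_, hblt⟩ := Fin.ext hb
        rw [hb']; exact this
      exact hsm.injective
    -- injective monotone self-map of Fin n is the identity
    have hsm : StrictMono f := hmono.strictMono_of_injective hinj
    have hsurj : Function.Surjective f := Finite.surjective_of_injective hinj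
    have hrange : Set.range f = Set.range (id : Fin n → Fin n) := by
      rw [Set.range_id]
      exact hsurj.range_eq
    have inst : WellFoundedLT (Fin n) := inferInstance
    exact (@StrictMono.range_inj (Fin n) (Fin n) _ _ inst f id hsm strictMono_id).mp hrange
  -- compute the iterated integral
  unfold iint
  rw [Finset.sum_eq_single (id : Fin n → Fin n)]
  · have hnum : (∏ i, PStep.pair (ω i) (σ (((id : Fin n → Fin n) i : ℕ) + 1))) = 1 := by
      apply Finset.prod_eq_one
      intro i _
      exact keyB i
    have hvol : volFin (fun i : Fin n => ((id : Fin n → Fin n) i : ℕ)) = 1 :=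
      volFin_injective (fun a b hab => Fin.ext hab)
    rw [hnum, hvol]
    norm_num
  · intro f hf hfne
    rcases eq_or_ne (∏ i, PStep.pair (ω i) (σ ((f i : ℕ) + 1))) 0 with hzero | hzero
    · rw [hzero]; simp
    · exfalso
      apply hfne
      apply keyC f (Finset.mem_filter.mp hf).2
      intro i hi
      exact hzero (Finset.prod_eq_zero (Finset.mem_univ i) hi)
  · intro hid
    exfalso
    exact hid (Finset.mem_filter.mpr ⟨Finset.mem_univ _, monotone_id⟩)
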